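/- If two invertible elements T₁ and T₂ of the Clifford algebra Cl(p,q) of even dimension n both satisfy T⁻¹eᵃT = γᵃ for the same fixed elements γᵃ (a = 1, ..., n), then T₂ = λT₁ for some nonzero scalar λ. -/

import Mathlib

open CliffordAlgebra

/-- The quadratic form of signature (p,q) on ℝⁿ, n = p + q. -/
noncomputable def Qpq (p q : ℕ) : QuadraticForm ℝ (Fin (p + q) → ℝ) :=
  QuadraticMap.weightedSumSquares ℝ (fun i => if (i : ℕ) < p then (1 : ℝ) else -1)

/-- The generators e¹, ..., eⁿ of the Clifford algebra Cl(p,q). -/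
noncomputable def gen (p q : ℕ) (a : Fin (p + q)) : CliffordAlgebra (Qpq p q) :=
  ι (Qpq p q) (Pi.single a 1)

/-- The volume element e¹e²⋯eⁿ of Cl(p,q). -/
noncomputable def vol (p q : ℕ) : CliffordAlgebra (Qpq p q) :=
  ((List.finRange (p + q)).map (gen p q)).prod

/-- The diagonal matrix η = diag(1,...,1,−1,...,−1) with p pluses and q minuses. -/
def eta (p q : ℕ) (a b : Fin (p + q)) : ℝ :=
  if a = b then (if (a : ℕ) < p then 1 else -1) else 0

namespace Stmt7
variable (p q : ℕ)

/-- the weight of index a -/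
def w (a : Fin (p + q)) : ℝ := if (a : ℕ) < p then 1 else -1

lemma w_sq (a : Fin (p + q)) : w p q a * w p q a = 1 := by
  unfold w; split <;> norm_num

lemma w_ne (a : Fin (p + q)) : w p q a ≠ 0 := by
  unfold w; split <;> norm_num

lemma Q_single (a : Fin (p + q)) : Qpq p q (Pi.single a 1) = w p q a := by
  unfold Qpq w
  rw [QuadraticMap.weightedSumSquares_apply]
  rw [Finset.sum_eq_single a]
  · simp
  · intro b _ hb; simp [Pi.single_apply, hb]
  · simp

lemma polar_single (a : Fin (p + q)) (m : Fin (p + q) → ℝ) :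
    QuadraticMap.polar (Qpq p q) (Pi.single a 1) m = 2 * w p q a * m a := by
  unfold QuadraticMap.polar Qpq
  simp only [QuadraticMap.weightedSumSquares_apply]
  rw [← Finset.sum_sub_distrib, ← Finset.sum_sub_distrib]
  rw [Finset.sum_eq_single a]
  · simp only [Pi.add_apply, Pi.single_eq_same, w, smul_eq_mul]
    split <;> ring
  · intro b _ hb
    simp only [Pi.add_apply, Pi.single_eq_of_ne hb, smul_eq_mul, zero_add]
    ring
  · simp

lemma gen_sq (a : Fin (p + q)) :
    gen p q a * gen p q a = algebraMap ℝ _ (w p q a) := by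
  rw [gen, ι_sq_scalar, Q_single]

end Stmt7

namespace Stmt7
variable (p q : ℕ)

/-- pointwise multiplication by v as a linear map -/
noncomputable def Dv (v : Fin (p + q) → ℝ) :
    (Fin (p + q) → ℝ) →ₗ[ℝ] (Fin (p + q) → ℝ) :=
  LinearMap.pi (fun b => v b • LinearMap.proj b)

lemma Dv_apply (v m : Fin (p + q) → ℝ) : Dv p q v m = v * m := by
  funext b
  simp [Dv, LinearMap.pi_apply]

/-- pointwise sign scaling as an isometry of Qpq, for v with v b ^2 = 1 -/
noncomputable def sgnIso (v : Fin (p + q) → ℝ) (hv : ∀ b, v b * v b = 1) :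
    Qpq p q →qᵢ Qpq p q where
  toLinearMap := Dv p q v
  map_app' m := by
    show Qpq p q (Dv p q v m) = Qpq p q m
    rw [Dv_apply]
    unfold Qpq
    rw [QuadraticMap.weightedSumSquares_apply, QuadraticMap.weightedSumSquares_apply]
    refine Finset.sum_congr rfl fun i _ => ?_
    rw [Pi.mul_apply]
    have : v i * m i * (v i * m i) = (v i * v i) * (m i * m i) := by ring
    rw [this, hv, one_mul]

lemma sgnIso_apply (v : Fin (p + q) → ℝ) (hv : ∀ b, v b * v b = 1) (m : Fin (p + q) → ℝ) :
    sgnIso p q v hv m = v * m := by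
  show Dv p q v m = v * m
  rw [Dv_apply]

/-- the algebra automorphism induced by a sign vector -/
noncomputable def X (v : Fin (p + q) → ℝ) (hv : ∀ b, v b * v b = 1) :
    CliffordAlgebra (Qpq p q) →ₐ[ℝ] CliffordAlgebra (Qpq p q) :=
  CliffordAlgebra.map (sgnIso p q v hv)

lemma X_ι (v : Fin (p + q) → ℝ) (hv : ∀ b, v b * v b = 1) (m : Fin (p + q) → ℝ) :
    X p q v hv (ι (Qpq p q) m) = ι (Qpq p q) (v * m) := by
  rw [X, map_apply_ι, sgnIso_apply]

lemma X_gen (v : Fin (p + q) → ℝ) (hv : ∀ b, v b * v b = 1) (a : Fin (p + q)) :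
    X p q v hv (gen p q a) = v a • gen p q a := by
  rw [gen, X_ι, ← map_smul]
  congr 1
  funext b
  rcases eq_or_ne b a with rfl | hb
  · simp
  · simp [Pi.single_eq_of_ne hb]

lemma X_mul_apply (v u : Fin (p + q) → ℝ) (hv : ∀ b, v b * v b = 1)
    (hu : ∀ b, u b * u b = 1) (huv : ∀ b, (v * u) b * (v * u) b = 1)
    (x : CliffordAlgebra (Qpq p q)) :
    X p q (v * u) huv x = X p q v hv (X p q u hu x) := by
  have : X p q (v * u) huv = (X p q v hv).comp (X p q u hu) := by
    apply CliffordAlgebra.hom_ext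
    apply LinearMap.ext; intro m
    simp only [LinearMap.comp_apply, AlgHom.toLinearMap_apply, AlgHom.comp_apply]
    rw [X_ι, X_ι, X_ι]
    congr 1
    funext b; simp [mul_assoc]
  rw [this]; rfl

lemma X_one_apply (h1 : ∀ b, (1 : Fin (p + q) → ℝ) b * (1 : Fin (p + q) → ℝ) b = 1)
    (x : CliffordAlgebra (Qpq p q)) : X p q 1 h1 x = x := by
  have : X p q 1 h1 = AlgHom.id ℝ _ := by
    apply CliffordAlgebra.hom_ext
    apply LinearMap.ext; intro m
    simp only [LinearMap.comp_apply, AlgHom.toLinearMap_apply, AlgHom.id_apply]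
    rw [X_ι, one_mul]
  rw [this]; rfl

/-- the sign vector of a single reflection fixing a -/
def s (a : Fin (p + q)) : Fin (p + q) → ℝ := fun b => if b = a then 1 else -1

lemma s_sq (a b : Fin (p + q)) : s p q a b * s p q a b = 1 := by
  unfold s; split <;> norm_num

/-- the sign vector attached to a finset -/
def c (S : Finset (Fin (p + q))) : Fin (p + q) → ℝ := fun b => if b ∈ S then -1 else 1

lemma c_sq (S : Finset (Fin (p + q))) (b : Fin (p + q)) : c p q S b * c p q S b = 1 := by
  unfold c; split <;> norm_num

end Stmt7

namespace Stmt7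
variable (p q : ℕ)

lemma gen_comm (a : Fin (p + q)) (x : CliffordAlgebra (Qpq p q)) :
    gen p q a * x = X p q (s p q a) (s_sq p q a) x * gen p q a := by
  induction x using CliffordAlgebra.induction with
  | algebraMap r =>
      rw [AlgHom.commutes, Algebra.commutes]
  | add x y hx hy =>
      rw [mul_add, map_add, add_mul, hx, hy]
  | mul x y hx hy =>
      rw [← mul_assoc, hx, mul_assoc, hy, map_mul, mul_assoc]
  | ι m =>
      rw [X_ι]
      have key : s p q a * m + m = (2 * m a) • (Pi.single a 1 : Fin (p + q) → ℝ) := by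
        funext b
        rcases eq_or_ne b a with rfl | hb
        · simp [s]; ring
        · simp [s, if_neg hb, Pi.single_eq_of_ne hb]
      have h1 : ι (Qpq p q) (s p q a * m) =
          (2 * m a) • gen p q a - ι (Qpq p q) m := by
        rw [eq_sub_iff_add_eq, gen, ← map_smul, ← map_add, key]
      have h2 : gen p q a * ι (Qpq p q) m + ι (Qpq p q) m * gen p q a
          = algebraMap ℝ _ (2 * w p q a * m a) := by
        rw [gen, ι_mul_ι_add_swap, polar_single]
      rw [h1, sub_mul, smul_mul_assoc, gen_sq, eq_sub_iff_add_eq, h2,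
        Algebra.smul_def, ← map_mul]
      congr 1
      ring

end Stmt7

namespace Stmt7
variable (p q : ℕ)

/-- basis-like element attached to a finset of indices -/
noncomputable def eF (A : Finset (Fin (p + q))) : CliffordAlgebra (Qpq p q) :=
  ((A.sort (· ≤ ·)).map (gen p q)).prod

lemma eF_empty : eF p q ∅ = 1 := by
  simp [eF]

lemma gen_anticomm {a b : Fin (p + q)} (h : a ≠ b) :
    gen p q a * gen p q b = -(gen p q b * gen p q a) := by
  have h0 : QuadraticMap.polar (Qpq p q) (Pi.single a 1) (Pi.single b 1) = 0 := by
    rw [polar_single]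
    simp [Pi.single_apply, h]
  have := ι_mul_ι_add_swap (Q := Qpq p q) (Pi.single a (1:ℝ)) (Pi.single b 1)
  rw [h0, map_zero] at this
  rw [gen, gen]
  exact eq_neg_of_add_eq_zero_left this

lemma perm_smul {l l' : List (Fin (p + q))} (h : l.Perm l') :
    ∃ r : ℝ, (l.map (gen p q)).prod = r • (l'.map (gen p q)).prod := by
  induction h with
  | nil => exact ⟨1, by simp⟩
  | cons x h ih =>
      obtain ⟨r, hr⟩ := ih
      exact ⟨r, by simp only [List.map_cons, List.prod_cons, hr, mul_smul_comm]⟩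
  | swap x y l =>
      rcases eq_or_ne y x with rfl | hxy
      · exact ⟨1, by simp⟩
      · refine ⟨-1, ?_⟩
        simp only [List.map_cons, List.prod_cons, ← mul_assoc]
        rw [gen_anticomm p q hxy]
        simp
  | trans h₁ h₂ ih₁ ih₂ =>
      obtain ⟨r₁, hr₁⟩ := ih₁
      obtain ⟨r₂, hr₂⟩ := ih₂
      exact ⟨r₁ * r₂, by rw [hr₁, hr₂, smul_smul]⟩

/-- toggling membership of a -/
def tog (A : Finset (Fin (p + q))) (a : Fin (p + q)) : Finset (Fin (p + q)) :=
  if a ∈ A then A.erase a else insert a A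

lemma tog_tog (A : Finset (Fin (p + q))) (a : Fin (p + q)) :
    tog p q (tog p q A a) a = A := by
  unfold tog
  by_cases h : a ∈ A
  · rw [if_pos h, if_neg (Finset.notMem_erase a A), Finset.insert_erase h]
  · rw [if_neg h, if_pos (Finset.mem_insert_self a A), Finset.erase_insert h]

lemma gen_mul_eF (a : Fin (p + q)) (A : Finset (Fin (p + q))) :
    ∃ r : ℝ, gen p q a * eF p q A = r • eF p q (tog p q A a) := by
  by_cases h : a ∈ A
  · -- A.sort ~ a :: (A.erase a).sort
    have hperm : (A.sort (· ≤ ·)).Perm (a :: ((A.erase a).sort (· ≤ ·))) := by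
      refine (A.sort_perm_toList (· ≤ ·)).trans ?_
      have h1 : insert a (A.erase a) = A := Finset.insert_erase h
      have h2 : A.toList.Perm (a :: (A.erase a).toList) := by
        conv_lhs => rw [← h1]
        exact Finset.toList_insert (Finset.notMem_erase a A)
      exact h2.trans (List.Perm.cons a ((Finset.sort_perm_toList _ _).symm))
    obtain ⟨r, hr⟩ := perm_smul p q hperm
    refine ⟨r * w p q a, ?_⟩
    rw [tog, if_pos h, eF, hr]
    simp only [List.map_cons, List.prod_cons]
    rw [mul_smul_comm, ← mul_assoc, gen_sq, Algebra.smul_def, ← mul_assoc, ← map_mul,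
      ← Algebra.smul_def, eF]
  · have hperm : (a :: (A.sort (· ≤ ·))).Perm ((insert a A).sort (· ≤ ·)) := by
      refine (List.Perm.cons a (A.sort_perm_toList (· ≤ ·))).trans ?_
      exact ((Finset.sort_perm_toList (insert a A) _).trans (Finset.toList_insert h)).symm
    obtain ⟨r, hr⟩ := perm_smul p q hperm
    refine ⟨r, ?_⟩
    rw [tog, if_neg h, eF, eF]
    simpa only [List.map_cons, List.prod_cons] using hr

end Stmt7

namespace Stmt7
variable (p q : ℕ)

lemma char_sum {A : Finset (Fin (p + q))} (hA : A.Nonempty) :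
    ∑ S : Finset (Fin (p + q)), ((-1 : ℝ)) ^ (S ∩ A).card = 0 := by
  obtain ⟨a₀, ha₀⟩ := hA
  refine Finset.sum_ninvolution (fun S => tog p q S a₀) ?_ ?_ (fun S => Finset.mem_univ _)
    (fun S => tog_tog p q S a₀)
  · intro S
    by_cases h : a₀ ∈ S
    · simp only [tog, if_pos h]
      have h1 : (S ∩ A).card = ((S.erase a₀ ∩ A)).card + 1 := by
        have : S.erase a₀ ∩ A = (S ∩ A).erase a₀ := by
          ext x
          simp only [Finset.mem_inter, Finset.mem_erase]
          tauto
        rw [this, Finset.card_erase_add_one (Finset.mem_inter.2 ⟨h, ha₀⟩)]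
      rw [h1, pow_succ]
      ring
    · simp only [tog, if_neg h]
      have h1 : ((insert a₀ S) ∩ A).card = (S ∩ A).card + 1 := by
        have : (insert a₀ S) ∩ A = insert a₀ (S ∩ A) := Finset.insert_inter_of_mem ha₀
        rw [this, Finset.card_insert_of_notMem (fun hc => h (Finset.mem_inter.1 hc).1)]
      rw [h1, pow_succ]
      ring
  · intro S _
    by_cases h : a₀ ∈ S
    · simp only [tog, if_pos h]
      intro hc
      exact Finset.notMem_erase a₀ S (hc.symm ▸ h)
    · simp only [tog, if_neg h]
      intro hc
      exact h (hc ▸ Finset.mem_insert_self a₀ S)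

end Stmt7

namespace Stmt7
variable (p q : ℕ)

/-- averaging with character given by A -/
noncomputable def Pav (A : Finset (Fin (p + q))) (x : CliffordAlgebra (Qpq p q)) :
    CliffordAlgebra (Qpq p q) :=
  ∑ S : Finset (Fin (p + q)),
    ((-1 : ℝ) ^ (S ∩ A).card) • X p q (c p q S) (c_sq p q S) x

lemma Pav_add (A : Finset (Fin (p + q))) (x y : CliffordAlgebra (Qpq p q)) :
    Pav p q A (x + y) = Pav p q A x + Pav p q A y := by
  unfold Pav
  rw [← Finset.sum_add_distrib]
  refine Finset.sum_congr rfl fun S _ => ?_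
  rw [map_add, smul_add]

lemma Pav_smul (A : Finset (Fin (p + q))) (r : ℝ) (x : CliffordAlgebra (Qpq p q)) :
    Pav p q A (r • x) = r • Pav p q A x := by
  unfold Pav
  rw [Finset.smul_sum]
  refine Finset.sum_congr rfl fun S _ => ?_
  rw [map_smul, smul_comm]

lemma sign_identity (S A : Finset (Fin (p + q))) (a : Fin (p + q)) :
    (-1 : ℝ) ^ (S ∩ A).card * c p q S a = (-1 : ℝ) ^ (S ∩ tog p q A a).card := by
  by_cases hA : a ∈ A
  · by_cases hS : a ∈ S
    · have h1 : S ∩ tog p q A a = (S ∩ A).erase a := by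
        ext x
        simp only [tog, if_pos hA, Finset.mem_inter, Finset.mem_erase]
        tauto
      have h2 : (S ∩ A).card = (S ∩ tog p q A a).card + 1 := by
        rw [h1, Finset.card_erase_add_one (Finset.mem_inter.2 ⟨hS, hA⟩)]
      rw [h2, pow_succ, c, if_pos hS]
      ring
    · have h1 : S ∩ tog p q A a = S ∩ A := by
        ext x
        simp only [tog, if_pos hA, Finset.mem_inter, Finset.mem_erase]
        constructor
        · tauto
        · rintro ⟨h3, h4⟩
          exact ⟨h3, fun hx => hS (hx ▸ h3), h4⟩
      rw [h1, c, if_neg hS, mul_one]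
  · by_cases hS : a ∈ S
    · have h1 : (S ∩ tog p q A a).card = (S ∩ A).card + 1 := by
        have h2 : S ∩ tog p q A a = insert a (S ∩ A) := by
          ext x
          simp only [tog, if_neg hA, Finset.mem_inter, Finset.mem_insert]
          constructor
          · rintro ⟨h3, h4 | h4⟩
            · exact Or.inl h4
            · exact Or.inr ⟨h3, h4⟩
          · rintro (rfl | ⟨h3, h4⟩)
            · exact ⟨hS, Or.inl rfl⟩
            · exact ⟨h3, Or.inr h4⟩
        rw [h2, Finset.card_insert_of_notMem (fun hc => hA (Finset.mem_inter.1 hc).2)]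
      rw [h1, pow_succ, c, if_pos hS]
    · have h1 : S ∩ tog p q A a = S ∩ A := by
        ext x
        simp only [tog, if_neg hA, Finset.mem_inter, Finset.mem_insert]
        constructor
        · rintro ⟨h3, rfl | h4⟩
          · exact absurd h3 hS
          · exact ⟨h3, h4⟩
        · tauto
      rw [h1, c, if_neg hS, mul_one]

lemma Pav_gen_mul (A : Finset (Fin (p + q))) (a : Fin (p + q))
    (x : CliffordAlgebra (Qpq p q)) :
    Pav p q A (gen p q a * x) = gen p q a * Pav p q (tog p q A a) x := by
  unfold Pav
  rw [Finset.mul_sum]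
  refine Finset.sum_congr rfl fun S _ => ?_
  rw [map_mul, X_gen, smul_mul_assoc, smul_smul, sign_identity, mul_smul_comm]

end Stmt7

namespace Stmt7
variable (p q : ℕ)

/-- Pav as a linear map -/
noncomputable def PavL (A : Finset (Fin (p + q))) :
    CliffordAlgebra (Qpq p q) →ₗ[ℝ] CliffordAlgebra (Qpq p q) where
  toFun := Pav p q A
  map_add' := Pav_add p q A
  map_smul' := Pav_smul p q A

lemma Pav_scalar (x : CliffordAlgebra (Qpq p q)) :
    ∀ A : Finset (Fin (p + q)), ∃ r : ℝ, Pav p q A x = r • eF p q A := by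
  induction x using CliffordAlgebra.left_induction with
  | algebraMap t =>
      intro A
      rcases A.eq_empty_or_nonempty with rfl | hA
      · refine ⟨(Fintype.card (Finset (Fin (p + q))) : ℝ) * t, ?_⟩
        unfold Pav
        simp only [Finset.inter_empty, Finset.card_empty, pow_zero, one_smul,
          AlgHom.commutes, Finset.sum_const, eF_empty, smul_eq_mul, mul_one]
        rw [Algebra.algebraMap_eq_smul_one, mul_smul, ← Nat.cast_smul_eq_nsmul ℝ]
        rfl
      · refine ⟨0, ?_⟩
        unfold Pav
        simp only [AlgHom.commutes, zero_smul]
        rw [← Finset.sum_smul, char_sum p q hA, zero_smul]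
  | add x y hx hy =>
      intro A
      obtain ⟨r₁, h₁⟩ := hx A
      obtain ⟨r₂, h₂⟩ := hy A
      exact ⟨r₁ + r₂, by rw [Pav_add, h₁, h₂, add_smul]⟩
  | ι_mul x m hx =>
      intro A
      choose r hr using hx
      choose t ht using fun a => gen_mul_eF p q a (tog p q A a)
      refine ⟨∑ a, m a * (r (tog p q A a) * t a), ?_⟩
      have hm : ι (Qpq p q) m = ∑ a, m a • gen p q a := by
        conv_lhs => rw [← Finset.univ_sum_single m]
        rw [map_sum]
        refine Finset.sum_congr rfl fun a _ => ?_
        rw [gen, ← map_smul]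
        congr 1
        funext b
        rcases eq_or_ne b a with rfl | hb
        · simp
        · simp [Pi.single_eq_of_ne hb]
      have expand : ι (Qpq p q) m * x = ∑ a, m a • (gen p q a * x) := by
        rw [hm, Finset.sum_mul]
        exact Finset.sum_congr rfl fun a _ => smul_mul_assoc _ _ _
      have : Pav p q A (ι (Qpq p q) m * x) =
          ∑ a, m a • Pav p q A (gen p q a * x) := by
        rw [expand]
        show PavL p q A _ = _
        rw [map_sum]
        exact Finset.sum_congr rfl fun a _ => (PavL p q A).map_smul _ _
      rw [this, Finset.sum_smul]
      refine Finset.sum_congr rfl fun a _ => ?_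
      rw [Pav_gen_mul, hr (tog p q A a), mul_smul_comm, ht a, tog_tog, smul_smul, smul_smul]
      ring_nf

end Stmt7

namespace Stmt7
variable (p q : ℕ)

lemma X_congr {v v' : Fin (p + q) → ℝ} (hv : ∀ b, v b * v b = 1)
    (hv' : ∀ b, v' b * v' b = 1) (h : v = v') (x : CliffordAlgebra (Qpq p q)) :
    X p q v hv x = X p q v' hv' x := by
  subst h; rfl

lemma prod_s_sq (S : Finset (Fin (p + q))) (b : Fin (p + q)) :
    (∏ a ∈ S, s p q a) b * (∏ a ∈ S, s p q a) b = 1 := by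
  rw [Finset.prod_apply, ← Finset.prod_mul_distrib]
  rw [Finset.prod_congr rfl (fun a _ => s_sq p q a b), Finset.prod_const_one]

lemma prod_s_apply (S : Finset (Fin (p + q))) (b : Fin (p + q)) :
    (∏ a ∈ S, s p q a) b =
      if b ∈ S then (-1 : ℝ) ^ (S.card - 1) else (-1 : ℝ) ^ S.card := by
  rw [Finset.prod_apply]
  by_cases hb : b ∈ S
  · rw [if_pos hb, ← Finset.mul_prod_erase S _ hb]
    have h1 : s p q b b = 1 := by simp [s]
    rw [h1, one_mul]
    rw [Finset.prod_congr rfl (fun a ha => ?_), Finset.prod_const, Finset.card_erase_of_mem hb]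
    show s p q a b = -1
    have hba : b ≠ a := fun h => Finset.ne_of_mem_erase ha h.symm
    simp [s, hba]
  · rw [if_neg hb]
    rw [Finset.prod_congr rfl (fun a ha => ?_), Finset.prod_const]
    show s p q a b = -1
    have : b ≠ a := fun h => hb (h ▸ ha)
    simp [s, this]

lemma c_eq (S : Finset (Fin (p + q))) :
    c p q S = ((-1 : ℝ) ^ S.card) • ∏ a ∈ S, s p q a := by
  funext b
  rw [Pi.smul_apply, prod_s_apply, smul_eq_mul]
  by_cases hb : b ∈ S
  · rw [if_pos hb, c, if_pos hb]
    obtain ⟨k, hk⟩ : ∃ k, S.card = k + 1 :=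
      ⟨S.card - 1, (Nat.succ_pred_eq_of_pos (Finset.card_pos.2 ⟨b, hb⟩)).symm⟩
    rw [hk, Nat.add_sub_cancel, pow_succ]
    have hx : ((-1 : ℝ)) ^ k * (-1) ^ k = 1 := by rw [← mul_pow]; norm_num
    linear_combination hx
  · rw [if_neg hb, c, if_neg hb, ← mul_pow]
    norm_num

lemma all_s (hn : Even (p + q)) :
    (∏ a : Fin (p + q), s p q a) = (fun _ => (-1 : ℝ)) := by
  funext b
  rw [prod_s_apply, if_pos (Finset.mem_univ b)]
  have hcard : (Finset.univ : Finset (Fin (p + q))).card = p + q := by simp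
  have hpos : 0 < p + q := b.pos
  rw [hcard]
  obtain ⟨k, hk⟩ := hn
  have : p + q - 1 = 2 * k - 1 := by omega
  refine Odd.neg_one_pow ⟨k - 1, by omega⟩

end Stmt7

namespace Stmt7
variable (p q : ℕ)

lemma central_scalar (hn : Even (p + q)) (z : CliffordAlgebra (Qpq p q))
    (zc : ∀ a, gen p q a * z = z * gen p q a) :
    ∃ r : ℝ, z = algebraMap ℝ _ r := by
  have hneg : ∀ b : Fin (p + q), (fun _ => (-1 : ℝ)) b * (fun _ => (-1 : ℝ)) b = 1 :=
    fun b => by norm_num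
  -- z is fixed by each single reflection
  have fix_s : ∀ a, X p q (s p q a) (s_sq p q a) z = z := by
    intro a
    have h := gen_comm p q a z
    rw [zc a] at h
    have h2 := congrArg (fun y => y * gen p q a) h
    rw [mul_assoc, mul_assoc, gen_sq, ← Algebra.commutes, ← Algebra.commutes,
      ← Algebra.smul_def, ← Algebra.smul_def] at h2
    exact (smul_right_injective _ (w_ne p q a) h2).symm
  -- z is fixed by products of reflections
  have fix_prod : ∀ S : Finset (Fin (p + q)),
      X p q (∏ a ∈ S, s p q a) (prod_s_sq p q S) z = z := by
    intro S
    induction S using Finset.induction_on with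
    | empty =>
        rw [X_congr p q _ (fun b => by norm_num : ∀ b : Fin (p + q),
          (1 : Fin (p + q) → ℝ) b * (1 : Fin (p + q) → ℝ) b = 1) Finset.prod_empty z]
        exact X_one_apply p q _ z
    | @insert a S ha ih =>
        have hmul : ∀ b, (s p q a * ∏ x ∈ S, s p q x) b *
            (s p q a * ∏ x ∈ S, s p q x) b = 1 := by
          intro b
          rw [Pi.mul_apply]
          have := s_sq p q a b
          have := prod_s_sq p q S b
          nlinarith [s_sq p q a b, prod_s_sq p q S b]
        rw [X_congr p q _ hmul (Finset.prod_insert ha) z,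
          X_mul_apply p q _ _ (s_sq p q a) (prod_s_sq p q S) hmul z, ih, fix_s]
  -- z is fixed by all sign automorphisms
  have fix_all : ∀ S : Finset (Fin (p + q)),
      X p q (c p q S) (c_sq p q S) z = z := by
    intro S
    rcases Nat.even_or_odd S.card with he | ho
    · have hc1 : c p q S = ∏ a ∈ S, s p q a := by
        rw [c_eq, he.neg_one_pow, one_smul]
      rw [X_congr p q _ (prod_s_sq p q S) hc1 z]
      exact fix_prod S
    · have hc1 : c p q S = (fun _ => (-1 : ℝ)) * ∏ a ∈ S, s p q a := by
        rw [c_eq, ho.neg_one_pow]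
        funext b
        simp
      have hmul : ∀ b, (((fun _ => (-1 : ℝ)) : Fin (p + q) → ℝ) * ∏ x ∈ S, s p q x) b *
          (((fun _ => (-1 : ℝ)) : Fin (p + q) → ℝ) * ∏ x ∈ S, s p q x) b = 1 := by
        intro b
        rw [Pi.mul_apply]
        nlinarith [prod_s_sq p q S b]
      rw [X_congr p q _ hmul hc1 z,
        X_mul_apply p q _ _ hneg (prod_s_sq p q S) hmul z, fix_prod S,
        X_congr p q hneg (prod_s_sq p q Finset.univ) (all_s p q hn).symm z]
      exact fix_prod Finset.univ
  -- averaging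
  obtain ⟨r, hr⟩ := Pav_scalar p q z ∅
  have hPav : Pav p q ∅ z = (Fintype.card (Finset (Fin (p + q))) : ℝ) • z := by
    unfold Pav
    simp only [Finset.inter_empty, Finset.card_empty, pow_zero, one_smul]
    rw [Finset.sum_congr rfl (fun S _ => fix_all S), Finset.sum_const,
      Nat.cast_smul_eq_nsmul]
    rfl
  have hN : (Fintype.card (Finset (Fin (p + q))) : ℝ) ≠ 0 :=
    Nat.cast_ne_zero.2 Fintype.card_ne_zero
  refine ⟨(Fintype.card (Finset (Fin (p + q))) : ℝ)⁻¹ * r, ?_⟩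
  have hz : z = (Fintype.card (Finset (Fin (p + q))) : ℝ)⁻¹ •
      (r • eF p q ∅) := by
    rw [← hr, hPav, inv_smul_smul₀ hN]
  rw [hz, eF_empty, smul_smul, Algebra.algebraMap_eq_smul_one]

end Stmt7

/-- In even dimension, two invertible elements conjugating the generators to the same
elements differ by a nonzero scalar factor. -/
theorem stmt_7 (p q : ℕ) (hn : Even (p + q))
    (T₁ T₂ : (CliffordAlgebra (Qpq p q))ˣ) (γ : Fin (p + q) → CliffordAlgebra (Qpq p q))
    (h₁ : ∀ a, (↑T₁⁻¹ : CliffordAlgebra (Qpq p q)) * gen p q a * (↑T₁ : CliffordAlgebra (Qpq p q)) = γ a)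
    (h₂ : ∀ a, (↑T₂⁻¹ : CliffordAlgebra (Qpq p q)) * gen p q a * (↑T₂ : CliffordAlgebra (Qpq p q)) = γ a) :
    ∃ c : ℝ, c ≠ 0 ∧ (↑T₂ : CliffordAlgebra (Qpq p q)) = c • (↑T₁ : CliffordAlgebra (Qpq p q)) := by
  have zc : ∀ a, gen p q a * ((↑T₂ : CliffordAlgebra (Qpq p q)) * ↑T₁⁻¹) =
      ((↑T₂ : CliffordAlgebra (Qpq p q)) * ↑T₁⁻¹) * gen p q a := by
    intro a
    have h := (h₁ a).trans (h₂ a).symm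
    have e1 := congrArg (fun y => (↑T₂ : CliffordAlgebra (Qpq p q)) * y *
      (↑T₁⁻¹ : CliffordAlgebra (Qpq p q))) h
    simp only [← mul_assoc] at e1 ⊢
    rw [Units.mul_inv_cancel_right, Units.mul_inv, one_mul] at e1
    exact e1.symm
  obtain ⟨r, hr⟩ := Stmt7.central_scalar p q hn _ zc
  refine ⟨r, ?_, ?_⟩
  · intro h0
    rw [h0, map_zero] at hr
    refine Units.ne_zero (T₂ * T₁⁻¹) ?_
    rw [Units.val_mul]
    exact hr
  · have hT : (↑T₂ : CliffordAlgebra (Qpq p q)) = (↑T₂ * ↑T₁⁻¹) * ↑T₁ := by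
      rw [Units.inv_mul_cancel_right]
    rw [hT, hr, ← Algebra.smul_def]
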